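/- The configuration space Conf₃(ℝ³) is simply connected: it is path-connected and its fundamental group (at any basepoint) is trivial. -/

import Mathlib

open Metric

noncomputable section

abbrev E3 : Type := EuclideanSpace ℝ (Fin 3)

/-- `e = (1,0,0) ∈ ℝ³`. -/
def e : E3 := EuclideanSpace.single (0 : Fin 3) (1 : ℝ)

def q1 : E3 := 0
def q2 : E3 := (4 : ℝ) • e
def q3 : E3 := (8 : ℝ) • e

/-- The configuration space `Conf₃(ℝ³)`, with the subspace topology. -/
abbrev Conf3 : Type :=
  {p : E3 × E3 × E3 // p.1 ≠ p.2.1 ∧ p.1 ≠ p.2.2 ∧ p.2.1 ≠ p.2.2}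

/-- The configuration space `Conf₂(ℝ³)`, with the subspace topology. -/
abbrev Conf2 : Type := {p : E3 × E3 // p.1 ≠ p.2}

/-- The unit sphere `S² ⊂ ℝ³`. -/
abbrev S2 : Type := sphere (0 : E3) 1

set_option maxHeartbeats 8000000

namespace Conf3SC

open Set Module
open scoped ENNReal NNReal

abbrev Wsp : Type := E3 × E3 × E3

def Good (p : Wsp) : Prop := p.1 ≠ p.2.1 ∧ p.1 ≠ p.2.2 ∧ p.2.1 ≠ p.2.2

lemma isOpen_good : IsOpen {p : Wsp | Good p} := by
  have h1 : IsOpen {p : Wsp | p.1 ≠ p.2.1} :=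
    isOpen_ne_fun continuous_fst (continuous_fst.comp continuous_snd)
  have h2 : IsOpen {p : Wsp | p.1 ≠ p.2.2} :=
    isOpen_ne_fun continuous_fst (continuous_snd.comp continuous_snd)
  have h3 : IsOpen {p : Wsp | p.2.1 ≠ p.2.2} :=
    isOpen_ne_fun (continuous_fst.comp continuous_snd) (continuous_snd.comp continuous_snd)
  exact (h1.inter (h2.inter h3))

/-- Parametrizations of the three "diagonals". -/
def g : Fin 3 → (E3 × E3) → Wsp
  | 0 => fun z => (z.1, z.1, z.2)
  | 1 => fun z => (z.1, z.2, z.1)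
  | 2 => fun z => (z.1, z.2, z.2)

lemma good_of_not_mem_ranges {p : Wsp} (h : ∀ i : Fin 3, ∀ w : E3 × E3, g i w ≠ p) :
    Good p := by
  obtain ⟨a, b, c⟩ := p
  refine ⟨?_, ?_, ?_⟩
  · intro hh; exact h 0 (a, c) (by simp [g]; exact hh)
  · intro hh; exact h 1 (a, b) (by simp [g]; exact hh)
  · intro hh; exact h 2 (a, b) (by simp [g]; exact hh)

lemma contDiff_g (i : Fin 3) : ContDiff ℝ 1 (g i) := by
  fin_cases i
  · exact contDiff_fst.prodMk (contDiff_fst.prodMk contDiff_snd)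
  · exact contDiff_fst.prodMk (contDiff_snd.prodMk contDiff_fst)
  · exact contDiff_fst.prodMk (contDiff_snd.prodMk contDiff_snd)

lemma finrank_Wsp : finrank ℝ Wsp = 9 := by
  simp [finrank_prod, finrank_euclideanSpace_fin]

/-- The key genericity lemma: a countable family of `C¹` images of convex sets of
dimension `< 9` has dense complement, so we can choose a small vector avoiding all of them. -/
lemma exists_avoid {ι : Type} [Countable ι] {D : Type} [NormedAddCommGroup D]
    [NormedSpace ℝ D] [FiniteDimensional ℝ D] (hD : finrank ℝ D < 9)
    (f : ι → D → Wsp) (s : ι → Set D) (hconv : ∀ i, Convex ℝ (s i))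
    (hf : ∀ i, ContDiffOn ℝ 1 (f i) (s i)) {ε : ℝ} (hε : 0 < ε) :
    ∃ u : Wsp, ‖u‖ < ε ∧ ∀ i, u ∉ f i '' (s i) := by
  have hd : Dense (⋃ i, f i '' s i)ᶜ := by
    apply dense_compl_of_dimH_lt_finrank
    rw [dimH_iUnion]
    have hle : ∀ i, dimH (f i '' s i) ≤ (finrank ℝ D : ℝ≥0∞) := by
      intro i
      calc dimH (f i '' s i) ≤ dimH (s i) := (hf i).dimH_image_le (hconv i) Subset.rfl
        _ ≤ dimH (univ : Set D) := dimH_mono (subset_univ _)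
        _ = (finrank ℝ D : ℝ≥0∞) := Real.dimH_univ_eq_finrank D
    refine lt_of_le_of_lt (iSup_le hle) ?_
    rw [finrank_Wsp]
    exact_mod_cast hD
  obtain ⟨u, hu1, hu2⟩ := hd.exists_mem_open isOpen_ball ⟨0, mem_ball_self hε⟩
  refine ⟨u, by simpa [mem_ball_zero_iff] using hu2, fun i hi => hu1 (mem_iUnion.2 ⟨i, hi⟩)⟩

/-- Build a path in `Conf3` from an ambient map. -/
def mkPath {x y : Conf3} (f : ℝ → Wsp) (hf : Continuous f)
    (hmem : ∀ t ∈ Icc (0:ℝ) 1, Good (f t)) (h0 : f 0 = x.val) (h1 : f 1 = y.val) :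
    Path x y where
  toFun t := ⟨f t, hmem t t.2⟩
  continuous_toFun := (hf.comp continuous_subtype_val).subtype_mk _
  source' := Subtype.ext (by simpa using h0)
  target' := Subtype.ext (by simpa using h1)

lemma mkPath_apply {x y : Conf3} (f : ℝ → Wsp) (hf) (hmem) (h0) (h1) (t : unitInterval) :
    ((mkPath (x := x) (y := y) f hf hmem h0 h1) t).val = f t := rfl

/-- Build a path homotopy in `Conf3` from an ambient two-parameter map. -/
lemma homotopic_of_fun {x y : Conf3} (p q : Path x y) (F : ℝ → ℝ → Wsp)
    (hF : Continuous fun st : ℝ × ℝ => F st.1 st.2)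
    (hmem : ∀ s ∈ Icc (0:ℝ) 1, ∀ t ∈ Icc (0:ℝ) 1, Good (F s t))
    (h0 : ∀ t : unitInterval, F 0 t = (p t).val)
    (h1 : ∀ t : unitInterval, F 1 t = (q t).val)
    (hx : ∀ s ∈ Icc (0:ℝ) 1, F s 0 = x.val)
    (hy : ∀ s ∈ Icc (0:ℝ) 1, F s 1 = y.val) :
    p.Homotopic q := by
  refine ⟨⟨⟨⟨fun st => ⟨F st.1 st.2, hmem _ st.1.2 _ st.2.2⟩, ?_⟩, ?_, ?_⟩, ?_⟩⟩
  · exact ((hF.comp ((continuous_subtype_val.comp continuous_fst).prodMk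
      (continuous_subtype_val.comp continuous_snd))).subtype_mk _)
  · intro t; exact Subtype.ext (by simpa using h0 t)
  · intro t; exact Subtype.ext (by simpa using h1 t)
  · intro s t ht
    simp only [Set.mem_insert_iff, Set.mem_singleton_iff] at ht
    rcases ht with rfl | rfl
    · exact Subtype.ext (by simpa [(show (F s.val 0 = x.val) from hx s s.2)] using
        (by simp [Path.source] : ((p 0 : Conf3)).val = x.val).symm)
    · exact Subtype.ext (by simpa [(show (F s.val 1 = y.val) from hy s s.2)] using
        (by simp [Path.target] : ((p 1 : Conf3)).val = y.val).symm)


/-! ### Piecewise linear interpolation -/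

def clamp (x : ℝ) : ℝ := max 0 (min 1 x)

lemma clamp_nonneg (x : ℝ) : 0 ≤ clamp x := le_max_left _ _

lemma clamp_le_one (x : ℝ) : clamp x ≤ 1 := max_le zero_le_one (min_le_left _ _)

lemma clamp_of_nonpos {x : ℝ} (h : x ≤ 0) : clamp x = 0 :=
  max_eq_left ((min_le_right _ _).trans h)

lemma clamp_of_one_le {x : ℝ} (h : 1 ≤ x) : clamp x = 1 := by
  rw [clamp, min_eq_left h]; exact max_eq_right zero_le_one

lemma clamp_of_mem {x : ℝ} (h0 : 0 ≤ x) (h1 : x ≤ 1) : clamp x = x := by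
  rw [clamp, min_eq_right h1]; exact max_eq_right h0

lemma continuous_clamp : Continuous clamp :=
  continuous_const.max (continuous_const.min continuous_id)

def pl (n : ℕ) (v : ℕ → Wsp) (t : ℝ) : Wsp :=
  v 0 + ∑ k ∈ Finset.range n, clamp (n * t - k) • (v (k + 1) - v k)

lemma continuous_pl (n : ℕ) (v : ℕ → Wsp) : Continuous (pl n v) := by
  apply continuous_const.add
  apply continuous_finset_sum
  intro k _
  exact (continuous_clamp.comp (by continuity)).smul continuous_const

lemma pl_seg (n : ℕ) (hn : 0 < n) {t : ℝ} (ht : t ∈ Icc (0:ℝ) 1) :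
    ∃ k : ℕ, k < n ∧ (k : ℝ) ≤ n * t ∧ n * t ≤ k + 1 ∧
      ∀ v : ℕ → Wsp, pl n v t = v k + ((n : ℝ) * t - k) • (v (k + 1) - v k) := by
  obtain ⟨ht0, ht1⟩ := ht
  have hnt0 : 0 ≤ (n:ℝ) * t := by positivity
  set k : ℕ := min ⌊(n:ℝ) * t⌋₊ (n - 1) with hkdef
  have hk_lt : k < n := lt_of_le_of_lt (min_le_right _ _) (Nat.pred_lt hn.ne')
  have hk_le : (k : ℝ) ≤ n * t :=
    le_trans (by exact_mod_cast Nat.cast_le.mpr (min_le_left _ _)) (Nat.floor_le hnt0)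
  have hk_ge : (n:ℝ) * t ≤ k + 1 := by
    rcases le_or_gt (⌊(n:ℝ)*t⌋₊) (n-1) with h | h
    · rw [hkdef, min_eq_left h]; exact (Nat.lt_floor_add_one _).le
    · rw [hkdef, min_eq_right h.le]
      have hcast : ((n-1:ℕ):ℝ) + 1 = (n:ℝ) := by
        have h2 := Nat.succ_pred_eq_of_pos hn
        exact_mod_cast congrArg (fun m : ℕ => (m:ℝ)) h2
      rw [hcast]
      have hn' : (0:ℝ) < n := by exact_mod_cast hn
      nlinarith
  refine ⟨k, hk_lt, hk_le, hk_ge, ?_⟩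
  intro v
  have key : ∀ m : ℕ, m ≤ n →
      ∑ j ∈ Finset.range m, clamp ((n:ℝ) * t - j) • (v (j + 1) - v j) =
        if m ≤ k then v m - v 0 else v k + ((n:ℝ) * t - k) • (v (k + 1) - v k) - v 0 := by
    intro m hm
    induction m with
    | zero => simp
    | succ m ih =>
      rw [Finset.sum_range_succ, ih (Nat.le_of_succ_le hm)]
      rcases lt_trichotomy m k with hmk | rfl | hmk
      · rw [if_pos (by omega : m ≤ k), if_pos (by omega : m + 1 ≤ k)]
        have h1 : (1:ℝ) ≤ (n:ℝ)*t - m := by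
          have hcast : (m:ℝ) + 1 ≤ (k:ℝ) := by exact_mod_cast hmk
          linarith
        rw [clamp_of_one_le h1, one_smul]
        abel
      · rw [if_pos (le_refl _), if_neg (by omega)]
        rw [clamp_of_mem (by linarith) (by linarith)]
        abel
      · rw [if_neg (by omega), if_neg (by omega)]
        have h0 : (n:ℝ)*t - m ≤ 0 := by
          have hcast : (k:ℝ) + 1 ≤ (m:ℝ) := by exact_mod_cast hmk
          linarith
        rw [clamp_of_nonpos h0, zero_smul, add_zero]
  rw [pl, key n le_rfl, if_neg (by omega)]
  abel

lemma pl_zero (n : ℕ) (v : ℕ → Wsp) : pl n v 0 = v 0 := by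
  rw [pl]
  have : ∀ k ∈ Finset.range n, clamp ((n:ℝ) * 0 - k) • (v (k + 1) - v k) = 0 := by
    intro k _
    rw [clamp_of_nonpos (by simp), zero_smul]
  rw [Finset.sum_congr rfl this]
  simp

lemma pl_one (n : ℕ) (v : ℕ → Wsp) : pl n v 1 = v n := by
  rw [pl]
  have : ∀ k ∈ Finset.range n, clamp ((n:ℝ) * 1 - k) • (v (k + 1) - v k) = v (k+1) - v k := by
    intro k hk
    have hk' : (k:ℝ) + 1 ≤ (n:ℝ) := by exact_mod_cast Finset.mem_range.mp hk
    rw [clamp_of_one_le (by linarith), one_smul]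
  rw [Finset.sum_congr rfl this, Finset.sum_range_sub]
  abel


/-! ### Path connectivity -/

lemma joined_conf3 (a b : Conf3) : Joined a b := by
  set A := a.val with hA
  set B := b.val with hB
  have hconv : ∀ _i : Fin 3, Convex ℝ {z : ℝ × (E3 × E3) | 0 < z.1 ∧ z.1 < 1} := by
    intro _
    have hlin : IsLinearMap ℝ (fun z : ℝ × (E3 × E3) => z.1) := ⟨fun _ _ => rfl, fun _ _ => rfl⟩
    exact (convex_halfSpace_gt hlin 0).inter (convex_halfSpace_lt hlin 1)
  have hcd : ∀ i : Fin 3, ContDiffOn ℝ 1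
      (fun z : ℝ × (E3 × E3) => (z.1 * (1 - z.1))⁻¹ • (g i z.2 - ((1 - z.1) • A + z.1 • B)))
      {z : ℝ × (E3 × E3) | 0 < z.1 ∧ z.1 < 1} := by
    intro i
    have h1 : ContDiffOn ℝ 1 (fun z : ℝ × (E3 × E3) => (z.1 * (1 - z.1))⁻¹)
        {z : ℝ × (E3 × E3) | 0 < z.1 ∧ z.1 < 1} := by
      apply ContDiffOn.inv
      · exact (contDiff_fst.mul (contDiff_const.sub contDiff_fst)).contDiffOn
      · rintro z ⟨hz0, hz1⟩
        exact mul_ne_zero (ne_of_gt hz0) (by linarith)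
    apply h1.smul
    apply ContDiffOn.sub
    · exact ((contDiff_g i).comp contDiff_snd).contDiffOn
    · exact (((contDiff_const.sub contDiff_fst).smul contDiff_const).add
        (contDiff_fst.smul contDiff_const)).contDiffOn
  have hdim : finrank ℝ (ℝ × (E3 × E3)) < 9 := by
    simp [finrank_prod, finrank_euclideanSpace_fin, finrank_self]
  obtain ⟨u, -, hu⟩ := exists_avoid hdim
    (fun (i : Fin 3) (z : ℝ × (E3 × E3)) =>
      (z.1 * (1 - z.1))⁻¹ • (g i z.2 - ((1 - z.1) • A + z.1 • B)))
    (fun _ => {z : ℝ × (E3 × E3) | 0 < z.1 ∧ z.1 < 1}) hconv hcd one_pos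
  refine ⟨mkPath (fun t => (1 - t) • A + t • B + (t * (1 - t)) • u) (by fun_prop) ?_ ?_ ?_⟩
  · intro t ⟨ht0, ht1⟩
    show Good ((1 - t) • A + t • B + (t * (1 - t)) • u)
    rcases eq_or_lt_of_le ht0 with h0 | h0
    · have : (1 - t) • A + t • B + (t * (1 - t)) • u = A := by rw [← h0]; simp
      rw [this]; exact a.2
    rcases eq_or_lt_of_le ht1 with h1 | h1
    · have : (1 - t) • A + t • B + (t * (1 - t)) • u = B := by rw [h1]; simp
      rw [this]; exact b.2
    · apply good_of_not_mem_ranges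
      intro i w hw
      have hτ : t * (1 - t) ≠ 0 := mul_ne_zero (ne_of_gt h0) (by linarith)
      apply hu i
      refine ⟨(t, w), ⟨h0, h1⟩, ?_⟩
      show (t * (1 - t))⁻¹ • (g i w - ((1 - t) • A + t • B)) = u
      rw [hw, add_sub_cancel_left, inv_smul_smul₀ hτ]
  · show (1 - (0:ℝ)) • A + (0:ℝ) • B + ((0:ℝ) * (1 - 0)) • u = A
    simp
  · show (1 - (1:ℝ)) • A + (1:ℝ) • B + ((1:ℝ) * (1 - 1)) • u = B
    simp

lemma nonempty_conf3 : Nonempty Conf3 := by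
  have he : e ≠ 0 := by
    intro h
    have h1 : ‖e‖ = 1 := by simp [e]
    rw [h] at h1; simp at h1
  refine ⟨⟨(0, e, (2:ℝ) • e), ?_, ?_, ?_⟩⟩
  · exact fun h => he h.symm
  · exact fun h => (smul_ne_zero (two_ne_zero) he) h.symm
  · intro h
    rw [two_smul] at h
    exact he (right_eq_add.mp h)

lemma pathConnected_conf3 : PathConnectedSpace Conf3 :=
  { nonempty := nonempty_conf3
    joined := joined_conf3 }



/-! ### Any two paths in `Conf3` are homotopic -/

theorem paths_homotopic (x y : Conf3) (p q : Path x y) : p.Homotopic q := by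
  classical
  set γ₁ : ℝ → Wsp := fun t => (p.extend t).val with hγ₁
  set γ₂ : ℝ → Wsp := fun t => (q.extend t).val with hγ₂
  have hc₁ : Continuous γ₁ := continuous_subtype_val.comp p.continuous_extend
  have hc₂ : Continuous γ₂ := continuous_subtype_val.comp q.continuous_extend
  -- a compact set containing both paths, and a safety margin ε
  set K : Set Wsp := γ₁ '' Icc 0 1 ∪ γ₂ '' Icc 0 1 with hK
  have hKc : IsCompact K := (isCompact_Icc.image hc₁).union (isCompact_Icc.image hc₂)
  have hKU : K ⊆ {w : Wsp | Good w} := by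
    rintro w (⟨t, -, rfl⟩ | ⟨t, -, rfl⟩)
    exacts [(p.extend t).2, (q.extend t).2]
  obtain ⟨δ, hδ, hthick⟩ := hKc.exists_thickening_subset_open isOpen_good hKU
  set ε := δ / 4 with hεdef
  have hε0 : 0 < ε := by positivity
  have hsafe : ∀ w z, z ∈ K → dist w z < 4 * ε → Good w := by
    intro w z hz hd
    exact hthick (mem_thickening_iff.mpr ⟨z, hz, by rw [hεdef] at hd; linarith⟩)
  have hγ₁K : ∀ t ∈ Icc (0:ℝ) 1, γ₁ t ∈ K := fun t ht => Or.inl ⟨t, ht, rfl⟩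
  have hγ₂K : ∀ t ∈ Icc (0:ℝ) 1, γ₂ t ∈ K := fun t ht => Or.inr ⟨t, ht, rfl⟩
  -- uniform continuity and subdivision
  have unif : ∀ γ : ℝ → Wsp, Continuous γ → ∃ η > 0, ∀ s ∈ Icc (0:ℝ) 1, ∀ t ∈ Icc (0:ℝ) 1,
      dist s t < η → dist (γ s) (γ t) < ε := by
    intro γ hγ
    have h := isCompact_Icc.uniformContinuousOn_of_continuous
      (f := γ) (s := Icc (0:ℝ) 1) hγ.continuousOn
    rw [Metric.uniformContinuousOn_iff] at h
    obtain ⟨η, hη, h⟩ := h ε hε0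
    exact ⟨η, hη, h⟩
  obtain ⟨η₁, hη₁, hu₁⟩ := unif γ₁ hc₁
  obtain ⟨η₂, hη₂, hu₂⟩ := unif γ₂ hc₂
  obtain ⟨m, hm⟩ := exists_nat_one_div_lt (lt_min hη₁ hη₂)
  set n : ℕ := m + 1 with hndef
  have hn0 : 0 < n := Nat.succ_pos m
  have hN0 : (0:ℝ) < n := by exact_mod_cast hn0
  have hstep : 1 / (n:ℝ) < min η₁ η₂ := by
    have hc : ((m:ℝ) + 1) = (n:ℝ) := by rw [hndef]; push_cast; ring
    rwa [hc] at hm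
  set v₁ : ℕ → Wsp := fun j => γ₁ (j / n) with hv₁
  set v₂ : ℕ → Wsp := fun j => γ₂ (j / n) with hv₂
  -- the PL approximation is 2ε-close
  have key : ∀ (γ : ℝ → Wsp) (η : ℝ), 1 / (n:ℝ) < η →
      (∀ s ∈ Icc (0:ℝ) 1, ∀ t ∈ Icc (0:ℝ) 1, dist s t < η → dist (γ s) (γ t) < ε) →
      ∀ t ∈ Icc (0:ℝ) 1, dist (pl n (fun j => γ (j / n)) t) (γ t) < 2 * ε := by
    intro γ η hηn hu t ht
    obtain ⟨k, hkn, hk1, hk2, hpl⟩ := pl_seg n hn0 ht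
    rw [hpl]
    set v : ℕ → Wsp := fun j => γ (j / n) with hv
    have hkn' : (k:ℝ) + 1 ≤ (n:ℝ) := by exact_mod_cast hkn
    have hk0 : (0:ℝ) ≤ (k:ℝ) := Nat.cast_nonneg k
    have hmem0 : (k:ℝ)/n ∈ Icc (0:ℝ) 1 :=
      ⟨by positivity, by rw [div_le_one hN0]; linarith⟩
    have hmem1 : ((k:ℝ)+1)/n ∈ Icc (0:ℝ) 1 :=
      ⟨by positivity, by rw [div_le_one hN0]; linarith⟩
    have hle1 : (k:ℝ)/n ≤ t := by rw [div_le_iff₀ hN0]; linarith [hk1, mul_comm (n:ℝ) t]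
    have hle2 : t ≤ ((k:ℝ)+1)/n := by rw [le_div_iff₀ hN0]; linarith [hk2, mul_comm (n:ℝ) t]
    have hd1 : dist (v (k+1)) (v k) < ε := by
      have hvk1 : v (k+1) = γ (((k:ℝ)+1)/n) := by
        simp only [hv]; norm_num
      rw [hvk1]
      apply hu _ hmem1 _ hmem0
      rw [Real.dist_eq]
      have he : ((k:ℝ)+1)/n - (k:ℝ)/n = 1/n := by field_simp; ring
      rw [he, abs_of_pos (by positivity)]
      exact lt_of_lt_of_le hηn le_rfl
    have hd2 : dist (v k) (γ t) < ε := by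
      apply hu _ hmem0 _ ht
      rw [Real.dist_eq, abs_sub_comm, abs_of_nonneg (by linarith)]
      have he : ((k:ℝ)+1)/n = (k:ℝ)/n + 1/n := by field_simp
      have : t - (k:ℝ)/n ≤ 1/n := by linarith [hle2, he ▸ hle2]
      linarith
    calc dist (v k + ((n:ℝ)*t - k) • (v (k+1) - v k)) (γ t)
        ≤ dist (v k + ((n:ℝ)*t - k) • (v (k+1) - v k)) (v k) + dist (v k) (γ t) :=
          dist_triangle _ _ _
      _ < ε + ε := by
          apply add_lt_add_of_le_of_lt ?_ hd2
          rw [dist_eq_norm, add_sub_cancel_left, norm_smul, Real.norm_eq_abs]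
          have habs : |(n:ℝ)*t - k| ≤ 1 := abs_le.mpr ⟨by linarith, by linarith⟩
          calc |(n:ℝ)*t - k| * ‖v (k+1) - v k‖
              ≤ 1 * ‖v (k+1) - v k‖ :=
                mul_le_mul_of_nonneg_right habs (norm_nonneg _)
            _ = ‖v (k+1) - v k‖ := one_mul _
            _ ≤ ε := by rw [← dist_eq_norm]; exact hd1.le
      _ = 2*ε := by ring
  have key₁ := key γ₁ η₁ (lt_of_lt_of_le hstep (min_le_left _ _)) hu₁
  have key₂ := key γ₂ η₂ (lt_of_lt_of_le hstep (min_le_right _ _)) hu₂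
  -- choose the generic perturbation u
  have hdim8 : finrank ℝ (ℝ × ℝ × (E3 × E3)) < 9 := by
    simp [finrank_prod, finrank_euclideanSpace_fin, finrank_self]
  have hlin : IsLinearMap ℝ (fun z : ℝ × ℝ × (E3 × E3) => z.2.1) :=
    ⟨fun _ _ => rfl, fun _ _ => rfl⟩
  have hconv : ∀ ik : Fin 3 × ℕ, Convex ℝ
      {z : ℝ × ℝ × (E3 × E3) | -((ik.2:ℝ)) < z.2.1 ∧ z.2.1 < (n:ℝ) - ik.2} := fun ik =>
    (convex_halfSpace_gt hlin _).inter (convex_halfSpace_lt hlin _)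
  have hcd : ∀ ik : Fin 3 × ℕ, ContDiffOn ℝ 1
      (fun z : ℝ × ℝ × (E3 × E3) =>
        (((z.2.1 + (ik.2:ℝ)) / n) * (1 - (z.2.1 + (ik.2:ℝ)) / n))⁻¹ •
          (g ik.1 z.2.2 - ((1 - z.1) • (v₁ ik.2 + z.2.1 • (v₁ (ik.2 + 1) - v₁ ik.2))
            + z.1 • (v₂ ik.2 + z.2.1 • (v₂ (ik.2 + 1) - v₂ ik.2)))))
      {z : ℝ × ℝ × (E3 × E3) | -((ik.2:ℝ)) < z.2.1 ∧ z.2.1 < (n:ℝ) - ik.2} := by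
    rintro ⟨i, k⟩
    have hr : ContDiff ℝ 1 (fun z : ℝ × ℝ × (E3 × E3) => z.2.1) :=
      contDiff_fst.comp contDiff_snd
    have hτ : ContDiff ℝ 1 (fun z : ℝ × ℝ × (E3 × E3) =>
        ((z.2.1 + (k:ℝ)) / n) * (1 - (z.2.1 + (k:ℝ)) / n)) :=
      ((hr.add contDiff_const).div_const _).mul
        (contDiff_const.sub ((hr.add contDiff_const).div_const _))
    have hinv : ContDiffOn ℝ 1 (fun z : ℝ × ℝ × (E3 × E3) =>
        (((z.2.1 + (k:ℝ)) / n) * (1 - (z.2.1 + (k:ℝ)) / n))⁻¹)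
        {z : ℝ × ℝ × (E3 × E3) | -((k:ℝ)) < z.2.1 ∧ z.2.1 < (n:ℝ) - k} := by
      apply ContDiffOn.inv hτ.contDiffOn
      rintro z ⟨ha, hb⟩
      have h1 : 0 < (z.2.1 + (k:ℝ)) / n := div_pos (by linarith) hN0
      have h2 : (z.2.1 + (k:ℝ)) / n < 1 := by rw [div_lt_one hN0]; linarith
      exact mul_ne_zero (ne_of_gt h1) (by linarith)
    apply hinv.smul
    apply ContDiffOn.sub
    · exact ((contDiff_g i).comp (contDiff_snd.comp contDiff_snd)).contDiffOn
    · apply ContDiffOn.add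
      · exact ((contDiff_const.sub contDiff_fst).smul
          (contDiff_const.add (hr.smul contDiff_const))).contDiffOn
      · exact (contDiff_fst.smul
          (contDiff_const.add (hr.smul contDiff_const))).contDiffOn
  obtain ⟨u, hu_small, hu_avoid⟩ := exists_avoid hdim8
    (fun (ik : Fin 3 × ℕ) (z : ℝ × ℝ × (E3 × E3)) =>
      (((z.2.1 + (ik.2:ℝ)) / n) * (1 - (z.2.1 + (ik.2:ℝ)) / n))⁻¹ •
        (g ik.1 z.2.2 - ((1 - z.1) • (v₁ ik.2 + z.2.1 • (v₁ (ik.2 + 1) - v₁ ik.2))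
          + z.1 • (v₂ ik.2 + z.2.1 • (v₂ (ik.2 + 1) - v₂ ik.2)))))
    (fun ik => {z : ℝ × ℝ × (E3 × E3) | -((ik.2:ℝ)) < z.2.1 ∧ z.2.1 < (n:ℝ) - ik.2})
    hconv hcd hε0
  -- endpoint values
  have hx10 : γ₁ 0 = x.val := by simp only [hγ₁]; rw [Path.extend_zero]
  have hx20 : γ₂ 0 = x.val := by simp only [hγ₂]; rw [Path.extend_zero]
  have hy11 : γ₁ 1 = y.val := by simp only [hγ₁]; rw [Path.extend_one]
  have hy21 : γ₂ 1 = y.val := by simp only [hγ₂]; rw [Path.extend_one]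
  have hv₁0 : v₁ 0 = x.val := by
    simp only [hv₁]; norm_num; exact hx10
  have hv₂0 : v₂ 0 = x.val := by
    simp only [hv₂]; norm_num; exact hx20
  have hv₁n : v₁ n = y.val := by
    simp only [hv₁]; rw [div_self hN0.ne']; exact hy11
  have hv₂n : v₂ n = y.val := by
    simp only [hv₂]; rw [div_self hN0.ne']; exact hy21
  -- the perturbed PL paths
  set f₁ : ℝ → Wsp := fun t => pl n v₁ t + (t * (1 - t)) • u with hf₁
  set f₂ : ℝ → Wsp := fun t => pl n v₂ t + (t * (1 - t)) • u with hf₂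
  have hτle : ∀ t ∈ Icc (0:ℝ) 1, |t * (1 - t)| ≤ 1 := by
    rintro t ⟨h0, h1⟩
    rw [abs_of_nonneg (by nlinarith)]
    nlinarith
  have hf₁cont : Continuous f₁ := by
    simp only [hf₁]
    exact (continuous_pl n v₁).add
      ((continuous_id.mul (continuous_const.sub continuous_id)).smul continuous_const)
  have hf₂cont : Continuous f₂ := by
    simp only [hf₂]
    exact (continuous_pl n v₂).add
      ((continuous_id.mul (continuous_const.sub continuous_id)).smul continuous_const)
  have hclose : ∀ (vv : ℕ → Wsp) (γ : ℝ → Wsp),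
      (∀ t ∈ Icc (0:ℝ) 1, dist (pl n vv t) (γ t) < 2 * ε) →
      ∀ t ∈ Icc (0:ℝ) 1, dist (pl n vv t + (t * (1 - t)) • u) (γ t) < 3 * ε := by
    intro vv γ hkey t ht
    calc dist (pl n vv t + (t * (1 - t)) • u) (γ t)
        ≤ dist (pl n vv t + (t * (1 - t)) • u) (pl n vv t) + dist (pl n vv t) (γ t) :=
          dist_triangle _ _ _
      _ < ε + 2 * ε := by
          apply add_lt_add_of_le_of_lt ?_ (hkey t ht)
          rw [dist_eq_norm, add_sub_cancel_left, norm_smul, Real.norm_eq_abs]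
          calc |t * (1 - t)| * ‖u‖ ≤ 1 * ‖u‖ :=
                mul_le_mul_of_nonneg_right (hτle t ht) (norm_nonneg _)
            _ = ‖u‖ := one_mul _
            _ ≤ ε := hu_small.le
      _ = 3 * ε := by ring
  have hf₁close := hclose v₁ γ₁ key₁
  have hf₂close := hclose v₂ γ₂ key₂
  have hf₁mem : ∀ t ∈ Icc (0:ℝ) 1, Good (f₁ t) := by
    intro t ht
    exact hsafe _ _ (hγ₁K t ht) (by simp only [hf₁]; linarith [hf₁close t ht])
  have hf₂mem : ∀ t ∈ Icc (0:ℝ) 1, Good (f₂ t) := by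
    intro t ht
    exact hsafe _ _ (hγ₂K t ht) (by simp only [hf₂]; linarith [hf₂close t ht])
  have hf₁0 : f₁ 0 = x.val := by
    simp only [hf₁]; rw [pl_zero]; norm_num; exact hv₁0
  have hf₂0 : f₂ 0 = x.val := by
    simp only [hf₂]; rw [pl_zero]; norm_num; exact hv₂0
  have hf₁1 : f₁ 1 = y.val := by
    simp only [hf₁]; rw [pl_one]; norm_num; exact hv₁n
  have hf₂1 : f₂ 1 = y.val := by
    simp only [hf₂]; rw [pl_one]; norm_num; exact hv₂n
  set P₁ : Path x y := mkPath f₁ hf₁cont hf₁mem hf₁0 hf₁1 with hP₁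
  set P₂ : Path x y := mkPath f₂ hf₂cont hf₂mem hf₂0 hf₂1 with hP₂
  -- first homotopy : p ~ P₁ (straight-line)
  have hom1 : p.Homotopic P₁ := by
    apply homotopic_of_fun p P₁ (fun s t => γ₁ t + s • (f₁ t - γ₁ t))
    · exact (hc₁.comp continuous_snd).add
        (continuous_fst.smul ((hf₁cont.comp continuous_snd).sub (hc₁.comp continuous_snd)))
    · intro s hs t ht
      show Good (γ₁ t + s • (f₁ t - γ₁ t))
      apply hsafe _ _ (hγ₁K t ht)
      rw [dist_eq_norm, add_sub_cancel_left, norm_smul, Real.norm_eq_abs]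
      have hd := hf₁close t ht
      rw [dist_eq_norm] at hd
      have habs : |s| ≤ 1 := abs_le.mpr ⟨by linarith [hs.1], hs.2⟩
      have hnn : (0:ℝ) ≤ ‖f₁ t - γ₁ t‖ := norm_nonneg _
      have hfd : ‖f₁ t - γ₁ t‖ < 3 * ε := by simp only [hf₁]; exact hd
      nlinarith
    · intro t
      show γ₁ ↑t + (0:ℝ) • (f₁ ↑t - γ₁ ↑t) = (p t).val
      rw [zero_smul, add_zero]
      simp only [hγ₁]
      rw [p.extend_extends']
    · intro t
      show γ₁ ↑t + (1:ℝ) • (f₁ ↑t - γ₁ ↑t) = f₁ ↑t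
      rw [one_smul]; abel
    · intro s hs
      show γ₁ 0 + s • (f₁ 0 - γ₁ 0) = x.val
      rw [hx10, hf₁0, sub_self, smul_zero, add_zero]
    · intro s hs
      show γ₁ 1 + s • (f₁ 1 - γ₁ 1) = y.val
      rw [hy11, hf₁1, sub_self, smul_zero, add_zero]
  -- third homotopy : q ~ P₂ (straight-line)
  have hom3 : q.Homotopic P₂ := by
    apply homotopic_of_fun q P₂ (fun s t => γ₂ t + s • (f₂ t - γ₂ t))
    · exact (hc₂.comp continuous_snd).add
        (continuous_fst.smul ((hf₂cont.comp continuous_snd).sub (hc₂.comp continuous_snd)))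
    · intro s hs t ht
      show Good (γ₂ t + s • (f₂ t - γ₂ t))
      apply hsafe _ _ (hγ₂K t ht)
      rw [dist_eq_norm, add_sub_cancel_left, norm_smul, Real.norm_eq_abs]
      have hd := hf₂close t ht
      rw [dist_eq_norm] at hd
      have habs : |s| ≤ 1 := abs_le.mpr ⟨by linarith [hs.1], hs.2⟩
      have hnn : (0:ℝ) ≤ ‖f₂ t - γ₂ t‖ := norm_nonneg _
      have hfd : ‖f₂ t - γ₂ t‖ < 3 * ε := by simp only [hf₂]; exact hd
      nlinarith
    · intro t
      show γ₂ ↑t + (0:ℝ) • (f₂ ↑t - γ₂ ↑t) = (q t).val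
      rw [zero_smul, add_zero]
      simp only [hγ₂]
      rw [q.extend_extends']
    · intro t
      show γ₂ ↑t + (1:ℝ) • (f₂ ↑t - γ₂ ↑t) = f₂ ↑t
      rw [one_smul]; abel
    · intro s hs
      show γ₂ 0 + s • (f₂ 0 - γ₂ 0) = x.val
      rw [hx20, hf₂0, sub_self, smul_zero, add_zero]
    · intro s hs
      show γ₂ 1 + s • (f₂ 1 - γ₂ 1) = y.val
      rw [hy21, hf₂1, sub_self, smul_zero, add_zero]
  -- middle homotopy : P₁ ~ P₂ (generic straight-line, avoiding the diagonals)
  have hom2 : P₁.Homotopic P₂ := by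
    apply homotopic_of_fun P₁ P₂
      (fun s t => (1 - s) • pl n v₁ t + s • pl n v₂ t + (t * (1 - t)) • u)
    · apply Continuous.add
      · exact ((continuous_const.sub continuous_fst).smul
          ((continuous_pl n v₁).comp continuous_snd)).add
          (continuous_fst.smul ((continuous_pl n v₂).comp continuous_snd))
      · exact ((continuous_snd.mul (continuous_const.sub continuous_snd)).smul
          continuous_const)
    · intro s hs t ht
      show Good ((1 - s) • pl n v₁ t + s • pl n v₂ t + (t * (1 - t)) • u)
      rcases eq_or_lt_of_le ht.1 with h0 | h0
      · rw [← h0, pl_zero, pl_zero, hv₁0, hv₂0]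
        have he : (1 - s) • x.val + s • x.val + ((0:ℝ) * (1 - 0)) • u = x.val := by module
        rw [he]; exact x.2
      rcases eq_or_lt_of_le ht.2 with h1 | h1
      · rw [h1, pl_one, pl_one, hv₁n, hv₂n]
        have he : (1 - s) • y.val + s • y.val + ((1:ℝ) * (1 - 1)) • u = y.val := by module
        rw [he]; exact y.2
      · apply good_of_not_mem_ranges
        intro i w hw
        obtain ⟨k, hkn, hk1, hk2, hpl⟩ := pl_seg n hn0 ht
        have hτ0 : t * (1 - t) ≠ 0 := mul_ne_zero (ne_of_gt h0) (by linarith)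
        apply hu_avoid (i, k)
        have htn : (((n:ℝ) * t - k) + k) / n = t := by field_simp; ring
        refine ⟨(s, ((n:ℝ) * t - k), w), ⟨?_, ?_⟩, ?_⟩
        · show -((k:ℝ)) < (n:ℝ) * t - k
          have : 0 < (n:ℝ) * t := mul_pos hN0 h0
          linarith
        · show (n:ℝ) * t - k < (n:ℝ) - k
          have : (n:ℝ) * t < n := by nlinarith
          linarith
        · show (((((n:ℝ) * t - k) + k) / n) * (1 - (((n:ℝ) * t - k) + k) / n))⁻¹ •
            (g i w - ((1 - s) • (v₁ k + ((n:ℝ) * t - k) • (v₁ (k + 1) - v₁ k))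
              + s • (v₂ k + ((n:ℝ) * t - k) • (v₂ (k + 1) - v₂ k)))) = u
          rw [htn, hw, hpl v₁, hpl v₂, add_sub_cancel_left, inv_smul_smul₀ hτ0]
    · intro t
      show (1 - (0:ℝ)) • pl n v₁ ↑t + (0:ℝ) • pl n v₂ ↑t + ((t:ℝ) * (1 - t)) • u = f₁ ↑t
      simp only [hf₁]
      rw [sub_zero, one_smul, zero_smul, add_zero]
    · intro t
      show (1 - (1:ℝ)) • pl n v₁ ↑t + (1:ℝ) • pl n v₂ ↑t + ((t:ℝ) * (1 - t)) • u = f₂ ↑t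
      simp only [hf₂]
      rw [sub_self, zero_smul, one_smul, zero_add]
    · intro s hs
      show (1 - s) • pl n v₁ 0 + s • pl n v₂ 0 + ((0:ℝ) * (1 - 0)) • u = x.val
      rw [pl_zero, pl_zero, hv₁0, hv₂0]; module
    · intro s hs
      show (1 - s) • pl n v₁ 1 + s • pl n v₂ 1 + ((1:ℝ) * (1 - 1)) • u = y.val
      rw [pl_one, pl_one, hv₁n, hv₂n]; module
  exact hom1.trans (hom2.trans hom3.symm)

end Conf3SC

theorem conf3_simply_connected :
    PathConnectedSpace Conf3 ∧
      ∀ x : Conf3, ∀ γ : FundamentalGroup Conf3 x, γ = 1 := by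
  have pc : PathConnectedSpace Conf3 := Conf3SC.pathConnected_conf3
  have sc : SimplyConnectedSpace Conf3 :=
    simply_connected_iff_paths_homotopic'.mpr
      ⟨pc, fun {a b} p q => Conf3SC.paths_homotopic a b p q⟩
  refine ⟨pc, fun x γ => ?_⟩
  haveI hsub : Subsingleton ((⟨x⟩ : FundamentalGroupoid Conf3) ⟶ ⟨x⟩) := by
    show Subsingleton (Path.Homotopic.Quotient x x)
    infer_instance
  exact Subsingleton.elim (α := (⟨x⟩ : FundamentalGroupoid Conf3) ⟶ ⟨x⟩) γ 1
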